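/- Let r : ℕ → ℝ be a sequence with r_n ∈ {-1, 1} for all n, and define f(x) = ∑_{n=0}^∞ (r_n/2^n)·φ(2^n x). Then the height of the graph of f over [0,1] is at most 2/3: for all x, x' ∈ [0,1], f(x) - f(x') ≤ 2/3 (equivalently, sup_{[0,1]} f - inf_{[0,1]} f ≤ 2/3). -/

import Mathlib

open Set MeasureTheory ENNReal

/-- `phi x` is the distance from `x` to the nearest integer. -/
noncomputable def phi (x : ℝ) : ℝ := |x - (round x : ℤ)|

/-- The Takagi function. -/
noncomputable def T (x : ℝ) : ℝ := ∑' n : ℕ, phi (2 ^ n * x) / 2 ^ n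

/-- The `n`-th binary digit of `x` (terminating expansion for dyadic rationals). -/
noncomputable def eps (n : ℕ) (x : ℝ) : ℤ := ⌊2 ^ n * x⌋ - 2 * ⌊2 ^ (n - 1) * x⌋

/-- `D k x = ∑_{j=1}^k (-1)^{ε_j(x)}`, the excess of 0 digits over 1 digits. -/
noncomputable def D (k : ℕ) (x : ℝ) : ℤ := ∑ j ∈ Finset.Icc 1 k, (1 - 2 * eps j x)

/-- The level set of the Takagi function at level `y`. -/
def L (y : ℝ) : Set ℝ := {x | x ∈ Set.Icc (0:ℝ) 1 ∧ T x = y}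

/-- `x` is a balanced dyadic rational of order `m`. -/
def BalancedOfOrder (x : ℝ) (m : ℕ) : Prop :=
  x ∈ Set.Ico (0:ℝ) 1 ∧ (∃ k : ℤ, x = (k : ℝ) / 2 ^ (2 * m)) ∧ D (2 * m) x = 0

/-- The generation of a balanced dyadic rational of order `m`:
the number of indices `1 ≤ j ≤ 2m` with `D j x = 0`. -/
noncomputable def generation (x : ℝ) (m : ℕ) : ℕ :=
  ((Finset.Icc 1 (2 * m)).filter (fun j => D j x = 0)).card

/-- A balanced dyadic rational of order `m` is leading if `D j x ≥ 0` for all `1 ≤ j ≤ 2m`. -/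
def Leading (x : ℝ) (m : ℕ) : Prop := ∀ j ∈ Finset.Icc 1 (2 * m), 0 ≤ D j x

/-- The equivalence relation whose classes are the local level sets. -/
def locSetoid : Setoid ℝ where
  r x x' := ∀ n : ℕ, 1 ≤ n → |D n x| = |D n x'|
  iseqv := ⟨fun _ _ _ => rfl, fun h n hn => (h n hn).symm,
    fun h g n hn => (h n hn).trans (g n hn)⟩

/-- The set of local level sets contained in `L y`: the image of `L y ∩ [0,1)`
under the quotient map of `locSetoid`. -/
def locClasses (y : ℝ) : Set (Quotient locSetoid) :=
  Quotient.mk locSetoid '' (L y ∩ Set.Ico (0:ℝ) 1)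

lemma phi_nonneg (x : ℝ) : 0 ≤ phi x := abs_nonneg _

lemma phi_le_half (x : ℝ) : phi x ≤ 1/2 := abs_sub_round x

lemma phi_two_le (x : ℝ) : phi (2*x) ≤ 2 * phi x := by
  have h := round_le (2*x) (2 * round x)
  unfold phi
  calc |2*x - (round (2*x) : ℤ)| ≤ |2*x - ((2 * round x : ℤ) : ℝ)| := h
    _ = 2 * |x - (round x : ℤ)| := by
        push_cast
        rw [show (2:ℝ)*x - 2*(round x : ℝ) = 2*(x - (round x : ℝ)) by ring, abs_mul]
        norm_num

lemma phi_two_le' (x : ℝ) : phi (2*x) ≤ 1 - 2 * phi x := by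
  have hb := abs_sub_round x
  rcases le_or_gt 0 (x - round x) with hu | hu
  · have h := round_le (2*x) (2 * round x + 1)
    have h1 : phi x = x - round x := abs_of_nonneg hu
    have h2 : |2*x - ((2 * round x + 1 : ℤ) : ℝ)| = 1 - 2*(x - round x) := by
      rw [abs_of_nonpos (by push_cast; rw [abs_le] at hb; linarith)]
      push_cast; ring
    unfold phi at *
    calc |2*x - (round (2*x) : ℤ)| ≤ |2*x - ((2 * round x + 1 : ℤ) : ℝ)| := h
      _ = 1 - 2 * |x - (round x : ℤ)| := by rw [h2, h1]
  · have h := round_le (2*x) (2 * round x - 1)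
    have h1 : phi x = -(x - round x) := abs_of_neg hu
    have h2 : |2*x - ((2 * round x - 1 : ℤ) : ℝ)| = 1 + 2*(x - round x) := by
      rw [abs_of_nonneg (by push_cast; rw [abs_le] at hb; linarith)]
      push_cast; ring
    unfold phi at *
    calc |2*x - (round (2*x) : ℤ)| ≤ |2*x - ((2 * round x - 1 : ℤ) : ℝ)| := h
      _ = 1 - 2 * |x - (round x : ℤ)| := by rw [h2, h1]; ring

lemma pair_bounds (s t : ℝ) (hs : s = -1 ∨ s = 1) :
    0 ≤ phi t + s * phi (2*t) / 2 ∧ phi t + s * phi (2*t) / 2 ≤ 1/2 := by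
  have h1 := phi_nonneg t
  have h2 := phi_nonneg (2*t)
  have h3 := phi_le_half t
  have h4 := phi_two_le t
  have h5 := phi_two_le' t
  rcases hs with h | h <;> subst h <;> constructor <;> linarith

theorem stmt19 (r : ℕ → ℝ) (hr : ∀ n, r n = -1 ∨ r n = 1)
    (f : ℝ → ℝ) (hf : ∀ x, f x = ∑' n : ℕ, r n / 2 ^ n * phi (2 ^ n * x)) :
    ∀ x ∈ Set.Icc (0:ℝ) 1, ∀ x' ∈ Set.Icc (0:ℝ) 1, f x - f x' ≤ 2/3 := by 
  intro x _ x' _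
  set a : ℝ → ℕ → ℝ := fun y n => r n / 2 ^ n * phi (2 ^ n * y) with ha
  have habs : ∀ y n, |a y n| ≤ (1/2) * (1/2)^n := by
    intro y n
    have h1 : |r n| = 1 := by rcases hr n with h | h <;> simp [h]
    have h2 : |phi (2^n * y)| ≤ 1/2 := by
      rw [abs_of_nonneg (phi_nonneg _)]; exact phi_le_half _
    rw [ha]
    simp only [abs_mul, abs_div, h1, abs_pow, abs_two]
    calc 1 / 2 ^ n * |phi (2^n * y)| ≤ 1 / 2^n * (1/2) := by
          apply mul_le_mul_of_nonneg_left h2 (by positivity)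
      _ = (1/2) * (1/2)^n := by rw [one_div, ← inv_pow]; ring
  have hgeo : Summable (fun n : ℕ => (1/2 : ℝ) * (1/2)^n) :=
    (summable_geometric_of_lt_one (by norm_num) (by norm_num)).mul_left _
  have hs : ∀ y, Summable (a y) := fun y =>
    (Summable.of_nonneg_of_le (fun n => abs_nonneg _) (habs y) hgeo).of_abs
  -- pairing
  set p : ℝ → ℕ → ℝ := fun y k => a y (2*k) + a y (2*k+1) with hp
  have hse : ∀ y, Summable (fun k => a y (2*k)) := fun y =>
    (hs y).comp_injective (fun m n h => by omega)
  have hso : ∀ y, Summable (fun k => a y (2*k+1)) := fun y =>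
    (hs y).comp_injective (fun m n h => by omega)
  have hsp : ∀ y, Summable (p y) := fun y => (hse y).add (hso y)
  have hfp : ∀ y, f y = ∑' k, p y k := by
    intro y
    rw [hf, ← tsum_even_add_odd (hse y) (hso y), ← Summable.tsum_add (hse y) (hso y)]
  -- pair difference bound
  have key : ∀ k, p x k - p x' k ≤ (1/2) * (1/4)^k := by
    intro k
    have hrk : r (2*k) * r (2*k) = 1 := by rcases hr (2*k) with h | h <;> rw [h] <;> norm_num
    set s := r (2*k) * r (2*k+1) with hsdef
    have hs' : s = -1 ∨ s = 1 := by
      rcases hr (2*k) with h | h <;> rcases hr (2*k+1) with h' | h' <;>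
        simp [hsdef, h, h']
    set B : ℝ → ℝ := fun y => phi (2^(2*k) * y) + s * phi (2 * (2^(2*k) * y)) / 2 with hB
    have hpB : ∀ y, p y k = r (2*k) / 4^k * B y := by
      intro y
      have h4 : (2:ℝ)^(2*k) = 4^k := by rw [pow_mul]; norm_num
      have h2k1 : (2:ℝ)^(2*k+1) = 2 * 4^k := by rw [pow_succ, h4]; ring
      have hrs : r (2*k) * s = r (2*k+1) := by rw [hsdef, ← mul_assoc, hrk, one_mul]
      simp only [hp, ha, hB]
      rw [show (2:ℝ)^(2*k+1) * y = 2*(2^(2*k)*y) by ring, h4, h2k1, ← hrs]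
      have h4ne : (4:ℝ)^k ≠ 0 := by positivity
      field_simp
    have hBmem : ∀ y, 0 ≤ B y ∧ B y ≤ 1/2 := fun y => pair_bounds s _ hs'
    clear_value B s
    obtain ⟨hb1, hb2⟩ := hBmem x
    obtain ⟨hb3, hb4⟩ := hBmem x'
    rw [hpB x, hpB x', ← mul_sub]
    have h1 : |r (2*k) / 4^k * (B x - B x')| ≤ (1/4)^k * (1/2) := by
      rw [abs_mul, abs_div]
      have : |r (2*k)| = 1 := by rcases hr (2*k) with h | h <;> simp [h]
      rw [this, abs_pow]
      have : |B x - B x'| ≤ 1/2 := by rw [abs_le]; constructor <;> linarith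
      calc 1 / |(4:ℝ)|^k * |B x - B x'| ≤ 1/|(4:ℝ)|^k * (1/2) := by
            apply mul_le_mul_of_nonneg_left this (by positivity)
        _ = (1/4)^k * (1/2) := by rw [abs_of_nonneg (by norm_num : (0:ℝ) ≤ 4), one_div, ← inv_pow]; ring
    calc r (2*k) / 4^k * (B x - B x') ≤ |r (2*k) / 4^k * (B x - B x')| := le_abs_self _
      _ ≤ (1/4)^k * (1/2) := h1
      _ = (1/2) * (1/4)^k := by ring
  have hgeo4 : Summable (fun k : ℕ => (1/2 : ℝ) * (1/4)^k) :=
    (summable_geometric_of_lt_one (by norm_num) (by norm_num)).mul_left _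
  have : f x - f x' = ∑' k, (p x k - p x' k) := by
    rw [hfp x, hfp x', Summable.tsum_sub (hsp x) (hsp x')]
  rw [this]
  calc ∑' k, (p x k - p x' k) ≤ ∑' k : ℕ, (1/2 : ℝ) * (1/4)^k :=
        Summable.tsum_le_tsum key ((hsp x).sub (hsp x')) hgeo4
    _ = (1/2) * (1 - 1/4)⁻¹ := by
        rw [tsum_mul_left, tsum_geometric_of_lt_one (by norm_num) (by norm_num)]
    _ = 2/3 := by norm_num
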